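/- arXiv:1710.10344 — 2 statements merged into one kernel-verified Lean document; each statement's English description precedes it below -/
import Mathlib

section
/- Define F(a_1,a_2,a_3) as the sum over all words w in {1,2,3} with a_i occurrences of letter i of the monomial q_1^{s_1(w)} q_2^{s_2(w)} q_3^{s_3(w)} (a Laurent polynomial in q_1,q_2,q_3). Then for a_1,a_2,a_3 ≥ 0 not all zero, F(a_1,a_2,a_3) = q_1^{a_2} q_3^{−a_3} F(a_1−1,a_2,a_3) + q_1^{−a_1} q_2^{a_3} F(a_1,a_2−1,a_3) + q_2^{−a_2} q_3^{a_1} F(a_1,a_2,a_3−1), with F(0,0,0)=1 and F interpreted as 0 when any argument is negative. -/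
/-- Number of pairs of positions i < j with `w i = a` and `w j = b`. -/
def cnt (a b : ℕ) (w : List ℕ) : ℕ :=
  ((Finset.univ : Finset (Fin w.length × Fin w.length)).filter
    (fun p => p.1 < p.2 ∧ w.get p.1 = a ∧ w.get p.2 = b)).card

def s1 (w : List ℕ) : ℤ := (cnt 2 1 w : ℤ) - (cnt 1 2 w : ℤ)
def s2 (w : List ℕ) : ℤ := (cnt 3 2 w : ℤ) - (cnt 2 3 w : ℤ)
def s3 (w : List ℕ) : ℤ := (cnt 1 3 w : ℤ) - (cnt 3 1 w : ℤ)

/-- The (finite) set of words in {1,2,3} with `a1` ones, `a2` twos and `a3` threes. -/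
def W (a1 a2 a3 : ℕ) : Finset (List ℕ) :=
  (List.replicate a1 1 ++ List.replicate a2 2 ++ List.replicate a3 3).permutations.toFinset

/-- The Laurent polynomial ring ℤ[q₁^{±1}, q₂^{±1}, q₃^{±1}]. -/
abbrev R := AddMonoidAlgebra ℤ (Fin 3 →₀ ℤ)

/-- The monomial `qᵢ^k`. -/
noncomputable def q (i : Fin 3) (k : ℤ) : R := AddMonoidAlgebra.single (Finsupp.single i k) 1

/-- The weight `q₁^{s₁(w)} q₂^{s₂(w)} q₃^{s₃(w)}` of a word. -/
noncomputable def weight (w : List ℕ) : R := q 0 (s1 w) * q 1 (s2 w) * q 2 (s3 w)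

/-- The weight enumerator, extended by 0 to negative arguments. -/
noncomputable def F (a1 a2 a3 : ℤ) : R :=
  if 0 ≤ a1 ∧ 0 ≤ a2 ∧ 0 ≤ a3 then ∑ w ∈ W a1.toNat a2.toNat a3.toNat, weight w else 0

lemma count_eq_sum (a : ℕ) (w : List ℕ) :
    w.count a = ∑ i : Fin w.length, if w.get i = a then 1 else 0 := by
  induction w with
  | nil => simp
  | cons x w ih =>
    simp only [List.length_cons]
    rw [Fin.sum_univ_succ, List.count_cons, ih]
    simp only [List.get_cons_zero, List.get_cons_succ, beq_iff_eq]
    rw [add_comm]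
    simp
    split_ifs <;> simp_all
lemma cnt_cons (a b x : ℕ) (w : List ℕ) :
    cnt a b (x :: w) = (if x = a then w.count b else 0) + cnt a b w := by
  rw [cnt, cnt, Finset.card_filter, Finset.card_filter, Fintype.sum_prod_type,
    Fintype.sum_prod_type]
  simp only [List.length_cons]
  rw [Fin.sum_univ_succ]
  congr 1
  · rw [Fin.sum_univ_succ]
    by_cases hx : x = a <;> simp [hx, Fin.succ_pos, count_eq_sum]
  · rw [Finset.sum_congr rfl]
    intro i _
    rw [Fin.sum_univ_succ]
    simp [Fin.succ_lt_succ_iff]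
lemma cnt_nil (a b : ℕ) : cnt a b [] = 0 := by simp [cnt]
lemma cnt_concat (a b c : ℕ) (w : List ℕ) :
    cnt a b (w ++ [c]) = cnt a b w + if c = b then w.count a else 0 := by
  induction w with
  | nil => simp [cnt_nil, cnt_cons]
  | cons x w ih =>
    rw [List.cons_append, cnt_cons, ih, cnt_cons, List.count_append, List.count_cons]
    simp only [List.count_nil, List.count_singleton, beq_iff_eq]
    split_ifs <;> simp_all [List.count_cons] <;> omega
lemma mem_W {a1 a2 a3 : ℕ} {w : List ℕ} :
    w ∈ W a1 a2 a3 ↔ ∀ x, w.count x =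
      if x = 1 then a1 else if x = 2 then a2 else if x = 3 then a3 else 0 := by
  rw [W, List.mem_toFinset, List.mem_permutations, List.perm_iff_count]
  refine forall_congr' fun x => ?_
  simp [List.count_append, List.count_replicate]
  split_ifs <;> omega
lemma q_add (i : Fin 3) (k l : ℤ) : q i (k + l) = q i k * q i l := by
  simp [q, AddMonoidAlgebra.single_mul_single, Finsupp.single_add]
lemma q_zero (i : Fin 3) : q i 0 = 1 := by
  simp [q, AddMonoidAlgebra.one_def]
lemma weight_concat1 (w : List ℕ) :
    weight (w ++ [1]) = q 0 (w.count 2) * q 2 (-(w.count 3 : ℤ)) * weight w := by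
  have h1 : s1 (w ++ [1]) = s1 w + (w.count 2 : ℤ) := by simp [s1, cnt_concat]; try ring
  have h2 : s2 (w ++ [1]) = s2 w := by simp [s2, cnt_concat]; try ring
  have h3 : s3 (w ++ [1]) = s3 w + (-(w.count 3 : ℤ)) := by simp [s3, cnt_concat]; try ring
  rw [weight, h1, h2, h3, q_add, q_add, weight]; ring
lemma weight_concat2 (w : List ℕ) :
    weight (w ++ [2]) = q 0 (-(w.count 1 : ℤ)) * q 1 (w.count 3) * weight w := by
  have h1 : s1 (w ++ [2]) = s1 w + (-(w.count 1 : ℤ)) := by simp [s1, cnt_concat]; try ring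
  have h2 : s2 (w ++ [2]) = s2 w + (w.count 3 : ℤ) := by simp [s2, cnt_concat]; try ring
  have h3 : s3 (w ++ [2]) = s3 w := by simp [s3, cnt_concat]; try ring
  rw [weight, h1, h2, h3, q_add, q_add, weight]; ring
lemma weight_concat3 (w : List ℕ) :
    weight (w ++ [3]) = q 1 (-(w.count 2 : ℤ)) * q 2 (w.count 1) * weight w := by
  have h1 : s1 (w ++ [3]) = s1 w := by simp [s1, cnt_concat]; try ring
  have h2 : s2 (w ++ [3]) = s2 w + (-(w.count 2 : ℤ)) := by simp [s2, cnt_concat]; try ring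
  have h3 : s3 (w ++ [3]) = s3 w + (w.count 1 : ℤ) := by simp [s3, cnt_concat]; try ring
  rw [weight, h1, h2, h3, q_add, q_add, weight]; ring
lemma filter_last_one (a1 a2 a3 : ℕ) :
    (W (a1+1) a2 a3).filter (fun w => w.getLast? = some 1) = (W a1 a2 a3).image (fun w => w ++ [1]) := by
  ext w
  simp only [Finset.mem_filter, Finset.mem_image]
  constructor
  · rintro ⟨hW, hl⟩
    have hne : w ≠ [] := by rintro rfl; simp at hl
    have hlast : w.getLast hne = 1 := by
      rw [List.getLast?_eq_getLast hne] at hl; exact Option.some.inj hl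
    have hdrop : w.dropLast ++ [1] = w := by
      conv_lhs => rw [← hlast]
      exact List.dropLast_append_getLast hne
    refine ⟨w.dropLast, ?_, hdrop⟩
    rw [mem_W]; intro x
    have hw := mem_W.mp hW x
    rw [← hdrop, List.count_append] at hw
    simp only [List.count_cons, List.count_nil, beq_iff_eq] at hw
    split_ifs at hw ⊢ <;> omega
  · rintro ⟨w', hw', rfl⟩
    refine ⟨?_, List.getLast?_concat⟩
    rw [mem_W]; intro x
    have hw := mem_W.mp hw' x
    rw [List.count_append]
    simp only [List.count_cons, List.count_nil, beq_iff_eq]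
    split_ifs at hw ⊢ <;> omega
lemma filter_last_two (a1 a2 a3 : ℕ) :
    (W a1 (a2+1) a3).filter (fun w => w.getLast? = some 2) = (W a1 a2 a3).image (fun w => w ++ [2]) := by
  ext w
  simp only [Finset.mem_filter, Finset.mem_image]
  constructor
  · rintro ⟨hW, hl⟩
    have hne : w ≠ [] := by rintro rfl; simp at hl
    have hlast : w.getLast hne = 2 := by
      rw [List.getLast?_eq_getLast hne] at hl; exact Option.some.inj hl
    have hdrop : w.dropLast ++ [2] = w := by
      conv_lhs => rw [← hlast]
      exact List.dropLast_append_getLast hne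
    refine ⟨w.dropLast, ?_, hdrop⟩
    rw [mem_W]; intro x
    have hw := mem_W.mp hW x
    rw [← hdrop, List.count_append] at hw
    simp only [List.count_cons, List.count_nil, beq_iff_eq] at hw
    split_ifs at hw ⊢ <;> omega
  · rintro ⟨w', hw', rfl⟩
    refine ⟨?_, List.getLast?_concat⟩
    rw [mem_W]; intro x
    have hw := mem_W.mp hw' x
    rw [List.count_append]
    simp only [List.count_cons, List.count_nil, beq_iff_eq]
    split_ifs at hw ⊢ <;> omega
lemma filter_last_three (a1 a2 a3 : ℕ) :
    (W a1 a2 (a3+1)).filter (fun w => w.getLast? = some 3) = (W a1 a2 a3).image (fun w => w ++ [3]) := by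
  ext w
  simp only [Finset.mem_filter, Finset.mem_image]
  constructor
  · rintro ⟨hW, hl⟩
    have hne : w ≠ [] := by rintro rfl; simp at hl
    have hlast : w.getLast hne = 3 := by
      rw [List.getLast?_eq_getLast hne] at hl; exact Option.some.inj hl
    have hdrop : w.dropLast ++ [3] = w := by
      conv_lhs => rw [← hlast]
      exact List.dropLast_append_getLast hne
    refine ⟨w.dropLast, ?_, hdrop⟩
    rw [mem_W]; intro x
    have hw := mem_W.mp hW x
    rw [← hdrop, List.count_append] at hw
    simp only [List.count_cons, List.count_nil, beq_iff_eq] at hw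
    split_ifs at hw ⊢ <;> omega
  · rintro ⟨w', hw', rfl⟩
    refine ⟨?_, List.getLast?_concat⟩
    rw [mem_W]; intro x
    have hw := mem_W.mp hw' x
    rw [List.count_append]
    simp only [List.count_cons, List.count_nil, beq_iff_eq]
    split_ifs at hw ⊢ <;> omega
lemma getLast?_mem {w : List ℕ} {c : ℕ} (h : w.getLast? = some c) : c ∈ w := by
  have hne : w ≠ [] := by rintro rfl; simp at h
  have := List.getLast?_eq_getLast hne
  rw [h] at this
  have h2 : w.getLast hne = c := (Option.some.inj this).symm
  rw [← h2]; exact List.getLast_mem hne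
lemma filter_last_one_empty (a2 a3 : ℕ) :
    (W 0 a2 a3).filter (fun w => w.getLast? = some 1) = ∅ := by
  rw [Finset.filter_eq_empty_iff]
  intro w hw hl
  have h1 := List.count_pos_iff.mpr (getLast?_mem hl)
  have h2 := mem_W.mp hw 1
  simp at h2; omega
lemma filter_last_two_empty (a1 a3 : ℕ) :
    (W a1 0 a3).filter (fun w => w.getLast? = some 2) = ∅ := by
  rw [Finset.filter_eq_empty_iff]
  intro w hw hl
  have h1 := List.count_pos_iff.mpr (getLast?_mem hl)
  have h2 := mem_W.mp hw 2
  simp at h2; omega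
lemma filter_last_three_empty (a1 a2 : ℕ) :
    (W a1 a2 0).filter (fun w => w.getLast? = some 3) = ∅ := by
  rw [Finset.filter_eq_empty_iff]
  intro w hw hl
  have h1 := List.count_pos_iff.mpr (getLast?_mem hl)
  have h2 := mem_W.mp hw 3
  simp at h2; omega
lemma last_mem_123 {a1 a2 a3 : ℕ} (hne : ¬(a1 = 0 ∧ a2 = 0 ∧ a3 = 0)) {w : List ℕ}
    (hw : w ∈ W a1 a2 a3) :
    w.getLast? = some 1 ∨ w.getLast? = some 2 ∨ w.getLast? = some 3 := by
  have hwne : w ≠ [] := by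
    rintro rfl
    have h1 := mem_W.mp hw 1
    have h2 := mem_W.mp hw 2
    have h3 := mem_W.mp hw 3
    simp at h1 h2 h3
    exact hne ⟨h1.symm, h2.symm, h3.symm⟩
  have hl := List.getLast?_eq_getLast hwne
  have hx : w.getLast hwne ∈ w := List.getLast_mem hwne
  have hcount := List.count_pos_iff.mpr hx
  have hc := mem_W.mp hw (w.getLast hwne)
  have hx123 : w.getLast hwne = 1 ∨ w.getLast hwne = 2 ∨ w.getLast hwne = 3 := by
    by_contra hcon
    push_neg at hcon
    rw [if_neg hcon.1, if_neg hcon.2.1, if_neg hcon.2.2] at hc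
    omega
  rcases hx123 with h | h | h <;> rw [hl, h] <;> tauto
lemma sum_split (S : Finset (List ℕ))
    (h : ∀ w ∈ S, w.getLast? = some 1 ∨ w.getLast? = some 2 ∨ w.getLast? = some 3)
    (f : List ℕ → R) :
    ∑ w ∈ S, f w =
      ∑ w ∈ S.filter (fun w => w.getLast? = some 1), f w +
      ∑ w ∈ S.filter (fun w => w.getLast? = some 2), f w +
      ∑ w ∈ S.filter (fun w => w.getLast? = some 3), f w := by
  rw [← Finset.sum_filter_add_sum_filter_not S (fun w => w.getLast? = some 1) f]
  rw [← Finset.sum_filter_add_sum_filter_not (S.filter (fun w => ¬ w.getLast? = some 1))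
    (fun w => w.getLast? = some 2) f]
  rw [Finset.filter_filter, Finset.filter_filter, add_assoc]
  congr 1
  congr 1
  · refine Finset.sum_congr (Finset.filter_congr fun w hw => ?_) fun _ _ => rfl
    constructor
    · exact fun h2 => h2.2
    · intro h2; exact ⟨by simp [h2], h2⟩
  · refine Finset.sum_congr (Finset.filter_congr fun w hw => ?_) fun _ _ => rfl
    have := h w hw
    constructor
    · intro h2; tauto
    · intro h3; constructor <;> simp [h3]
lemma count_of_mem_W {a1 a2 a3 : ℕ} {w : List ℕ} (hw : w ∈ W a1 a2 a3) :
    w.count 1 = a1 ∧ w.count 2 = a2 ∧ w.count 3 = a3 := by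
  have h1 := mem_W.mp hw 1
  have h2 := mem_W.mp hw 2
  have h3 := mem_W.mp hw 3
  simp at h1 h2 h3
  exact ⟨h1, h2, h3⟩
lemma sum_filter_one (a1 a2 a3 : ℕ) :
    ∑ w ∈ (W (a1+1) a2 a3).filter (fun w => w.getLast? = some 1), weight w
      = q 0 a2 * q 2 (-(a3 : ℤ)) * ∑ w ∈ W a1 a2 a3, weight w := by
  rw [filter_last_one, Finset.sum_image (fun x _ y _ h => List.append_cancel_right h),
    Finset.mul_sum]
  refine Finset.sum_congr rfl fun w hw => ?_
  obtain ⟨h1, h2, h3⟩ := count_of_mem_W hw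
  rw [weight_concat1, h2, h3]
lemma sum_filter_two (a1 a2 a3 : ℕ) :
    ∑ w ∈ (W a1 (a2+1) a3).filter (fun w => w.getLast? = some 2), weight w
      = q 0 (-(a1 : ℤ)) * q 1 a3 * ∑ w ∈ W a1 a2 a3, weight w := by
  rw [filter_last_two, Finset.sum_image (fun x _ y _ h => List.append_cancel_right h),
    Finset.mul_sum]
  refine Finset.sum_congr rfl fun w hw => ?_
  obtain ⟨h1, h2, h3⟩ := count_of_mem_W hw
  rw [weight_concat2, h1, h3]
lemma sum_filter_three (a1 a2 a3 : ℕ) :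
    ∑ w ∈ (W a1 a2 (a3+1)).filter (fun w => w.getLast? = some 3), weight w
      = q 1 (-(a2 : ℤ)) * q 2 a1 * ∑ w ∈ W a1 a2 a3, weight w := by
  rw [filter_last_three, Finset.sum_image (fun x _ y _ h => List.append_cancel_right h),
    Finset.mul_sum]
  refine Finset.sum_congr rfl fun w hw => ?_
  obtain ⟨h1, h2, h3⟩ := count_of_mem_W hw
  rw [weight_concat3, h1, h2]
theorem weight_enumerator_recurrence :
    F 0 0 0 = 1 ∧
    ∀ a1 a2 a3 : ℤ, 0 ≤ a1 → 0 ≤ a2 → 0 ≤ a3 → ¬(a1 = 0 ∧ a2 = 0 ∧ a3 = 0) →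
      F a1 a2 a3 =
        q 0 a2 * q 2 (-a3) * F (a1 - 1) a2 a3 +
        q 0 (-a1) * q 1 a3 * F a1 (a2 - 1) a3 +
        q 1 (-a2) * q 2 a1 * F a1 a2 (a3 - 1) := by
  constructor
  · rw [F]
    simp [W, weight, s1, s2, s3, cnt_nil, q_zero]
  · intro a1 a2 a3 h1 h2 h3 hne
    lift a1 to ℕ using h1 with n1
    lift a2 to ℕ using h2 with n2
    lift a3 to ℕ using h3 with n3
    have hne' : ¬(n1 = 0 ∧ n2 = 0 ∧ n3 = 0) := by
      simpa using hne
    have hF : F n1 n2 n3 = ∑ w ∈ W n1 n2 n3, weight w := by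
      rw [F, if_pos ⟨Int.natCast_nonneg n1, Int.natCast_nonneg n2, Int.natCast_nonneg n3⟩]
      simp
    rw [hF, sum_split _ (fun w hw => last_mem_123 hne' hw) weight]
    congr 1
    congr 1
    · cases n1 with
      | zero =>
        rw [filter_last_one_empty, show ((0:ℕ) : ℤ) - 1 = -1 by norm_num, F,
          if_neg (by norm_num)]
        simp
      | succ k =>
        rw [sum_filter_one, show ((k+1:ℕ) : ℤ) - 1 = (k : ℤ) by push_cast; ring, F,
          if_pos ⟨Int.natCast_nonneg k, Int.natCast_nonneg n2, Int.natCast_nonneg n3⟩]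
        simp
    · cases n2 with
      | zero =>
        rw [filter_last_two_empty, show ((0:ℕ) : ℤ) - 1 = -1 by norm_num, F,
          if_neg (by norm_num)]
        simp
      | succ k =>
        rw [sum_filter_two, show ((k+1:ℕ) : ℤ) - 1 = (k : ℤ) by push_cast; ring, F,
          if_pos ⟨Int.natCast_nonneg n1, Int.natCast_nonneg k, Int.natCast_nonneg n3⟩]
        simp
    · cases n3 with
      | zero =>
        rw [filter_last_three_empty, show ((0:ℕ) : ℤ) - 1 = -1 by norm_num, F,
          if_neg (by norm_num)]
        simp
      | succ k =>
        rw [sum_filter_three, show ((k+1:ℕ) : ℤ) - 1 = (k : ℤ) by push_cast; ring, F,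
          if_pos ⟨Int.natCast_nonneg n1, Int.natCast_nonneg n2, Int.natCast_nonneg k⟩]
        simp
end

section
/- The number of words in {1,2,3} with n occurrences of each letter satisfying s_1>0, s_2>0, s_3>0 is divisible by 3 for every n ≥ 1. -/
/-- The sucker's bet condition. -/
def SBC (w : List ℕ) : Prop := 0 < s1 w ∧ 0 < s2 w ∧ 0 < s3 w

instance : DecidablePred SBC := fun w => by unfold SBC; infer_instance

/-- The cyclic relabeling 1 ↦ 2, 2 ↦ 3, 3 ↦ 1. -/
def sig (l : ℕ) : ℕ := if l = 1 then 2 else if l = 2 then 3 else if l = 3 then 1 else l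

/-- Generic orbit lemma: a fixed-point-free map of order 3 on a finset gives 3 ∣ card. -/
lemma orbit3 {α : Type*} [DecidableEq α] (f : α → α) :
    ∀ S : Finset α, (∀ w ∈ S, f w ∈ S) → (∀ w ∈ S, f (f (f w)) = w) →
    (∀ w ∈ S, f w ≠ w) → 3 ∣ S.card := by
  intro S
  induction S using Finset.strongInduction with
  | _ S ih =>
    intro hmap h3 hfix
    rcases S.eq_empty_or_nonempty with rfl | ⟨w, hw⟩
    · simp
    · have h1 : f w ∈ S := hmap w hw
      have h2 : f (f w) ∈ S := hmap _ h1
      have hne1 : f w ≠ w := hfix w hw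
      have hne2 : f (f w) ≠ w := by
        intro h
        apply hne1
        have := h3 w hw
        rw [h] at this
        exact this
      have hne3 : f (f w) ≠ f w := by
        intro h
        apply hne1
        have h3w := h3 w hw
        rw [h, h] at h3w
        exact h3w
      set O : Finset α := {w, f w, f (f w)} with hO
      have hOsub : O ⊆ S := by
        intro x hx
        simp only [hO, Finset.mem_insert, Finset.mem_singleton] at hx
        rcases hx with rfl | rfl | rfl <;> assumption
      have hOcard : O.card = 3 := by
        rw [hO]
        rw [Finset.card_insert_of_notMem (by simp [hne1.symm, hne3.symm, Ne]; tauto),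
          Finset.card_insert_of_notMem (by simp [Ne]; exact fun h => hne3 h.symm)]
        simp
      set T := S \ O with hT
      have hTss : T ⊂ S := by
        apply Finset.sdiff_ssubset hOsub
        exact ⟨w, by simp [hO]⟩
      have hcard : S.card = T.card + 3 := by
        rw [hT, Finset.card_sdiff_of_subset hOsub, hOcard]
        have := Finset.card_le_card hOsub
        omega
      have hfinj : ∀ x ∈ S, ∀ y ∈ S, f x = f y → x = y := by
        intro x hx y hy hxy
        have := h3 x hx
        have h3y := h3 y hy
        rw [hxy] at this
        rw [← this, h3y]
      have hTmap : ∀ x ∈ T, f x ∈ T := by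
        intro x hx
        rw [hT, Finset.mem_sdiff] at hx ⊢
        obtain ⟨hxS, hxO⟩ := hx
        refine ⟨hmap x hxS, ?_⟩
        simp only [hO, Finset.mem_insert, Finset.mem_singleton] at hxO ⊢
        push_neg at hxO ⊢
        refine ⟨?_, ?_, ?_⟩
        · intro h
          apply hxO.2.2
          have := h3 x hxS
          rw [h] at this
          exact this.symm
        · intro h
          exact hxO.1 (hfinj x hxS w hw h)
        · intro h
          exact hxO.2.1 (hfinj x hxS (f w) h1 h)
      have hdvd : 3 ∣ T.card :=
        ih T hTss hTmap (fun x hx => h3 x (Finset.mem_sdiff.mp hx).1)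
          (fun x hx => hfix x (Finset.mem_sdiff.mp hx).1)
      omega

lemma sig_eq_one : ∀ x, sig x = 1 ↔ x = 3 := by intro x; unfold sig; split_ifs <;> omega
lemma sig_eq_two : ∀ x, sig x = 2 ↔ x = 1 := by intro x; unfold sig; split_ifs <;> omega
lemma sig_eq_three : ∀ x, sig x = 3 ↔ x = 2 := by intro x; unfold sig; split_ifs <;> omega

lemma cnt_map_sig {a b a' b' : ℕ} (ha : ∀ x, sig x = a ↔ x = a') (hb : ∀ x, sig x = b ↔ x = b')
    (w : List ℕ) : cnt a b (w.map sig) = cnt a' b' w := by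
  unfold cnt
  have hl : (w.map sig).length = w.length := List.length_map _
  apply Finset.card_bij' (fun p _ => (Fin.cast hl p.1, Fin.cast hl p.2))
    (fun p _ => (Fin.cast hl.symm p.1, Fin.cast hl.symm p.2))
  · intro p hp
    simp only [Finset.mem_filter, Finset.mem_univ, true_and] at hp ⊢
    obtain ⟨hlt, hpa, hpb⟩ := hp
    refine ⟨hlt, ?_, ?_⟩
    · have : (w.map sig).get p.1 = sig (w.get (Fin.cast hl p.1)) := by
        simp [List.get_eq_getElem, List.getElem_map]
      rw [this, ha] at hpa
      exact hpa
    · have : (w.map sig).get p.2 = sig (w.get (Fin.cast hl p.2)) := by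
        simp [List.get_eq_getElem, List.getElem_map]
      rw [this, hb] at hpb
      exact hpb
  · intro p hp
    simp only [Finset.mem_filter, Finset.mem_univ, true_and] at hp ⊢
    obtain ⟨hlt, hpa, hpb⟩ := hp
    refine ⟨hlt, ?_, ?_⟩
    · have : (w.map sig).get (Fin.cast hl.symm p.1) = sig (w.get p.1) := by
        simp [List.get_eq_getElem, List.getElem_map]
      rw [this, ha, hpa]
    · have : (w.map sig).get (Fin.cast hl.symm p.2) = sig (w.get p.2) := by
        simp [List.get_eq_getElem, List.getElem_map]
      rw [this, hb, hpb]
  · intro p _; rfl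
  · intro p _; rfl

lemma sig_sig_sig : ∀ x, sig (sig (sig x)) = x := by
  intro x; unfold sig; split_ifs <;> omega

lemma mem_W_iff {a1 a2 a3 : ℕ} {w : List ℕ} : w ∈ W a1 a2 a3 ↔
    w.Perm (List.replicate a1 1 ++ List.replicate a2 2 ++ List.replicate a3 3) := by
  rw [W, List.mem_toFinset, List.mem_permutations]

lemma map_sig_mem_W {n : ℕ} {w : List ℕ} (hw : w ∈ W n n n) : w.map sig ∈ W n n n := by
  rw [mem_W_iff] at hw ⊢
  have h1 : (w.map sig).Perm ((List.replicate n 1 ++ List.replicate n 2 ++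
      List.replicate n 3).map sig) := hw.map sig
  have h2 : (List.replicate n 1 ++ List.replicate n 2 ++ List.replicate n 3).map sig =
      List.replicate n 2 ++ List.replicate n 3 ++ List.replicate n 1 := by
    simp [List.map_replicate, sig]
  refine h1.trans ?_
  rw [h2, List.append_assoc (List.replicate n 1)]
  exact List.perm_append_comm

lemma map_eq_self {f : ℕ → ℕ} : ∀ {l : List ℕ}, l.map f = l → ∀ x ∈ l, f x = x := by
  intro l
  induction l with
  | nil => intro _ x hx; simp at hx
  | cons a t ih =>
    intro h x hx
    simp only [List.map_cons, List.cons.injEq] at h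
    rcases List.mem_cons.mp hx with rfl | hx
    · exact h.1
    · exact ih h.2 x hx

theorem count_div_three (n : ℕ) (hn : 1 ≤ n) :
    3 ∣ ((W n n n).filter SBC).card := by
  apply orbit3 (fun w => w.map sig)
  · intro w hw
    rw [Finset.mem_filter] at hw ⊢
    refine ⟨map_sig_mem_W hw.1, ?_⟩
    obtain ⟨hs1, hs2, hs3⟩ := hw.2
    refine ⟨?_, ?_, ?_⟩
    · show 0 < s1 (w.map sig)
      have : s1 (w.map sig) = s3 w := by
        unfold s1 s3
        rw [cnt_map_sig sig_eq_two sig_eq_one, cnt_map_sig sig_eq_one sig_eq_two]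
      rw [this]; exact hs3
    · show 0 < s2 (w.map sig)
      have : s2 (w.map sig) = s1 w := by
        unfold s2 s1
        rw [cnt_map_sig sig_eq_three sig_eq_two, cnt_map_sig sig_eq_two sig_eq_three]
      rw [this]; exact hs1
    · show 0 < s3 (w.map sig)
      have : s3 (w.map sig) = s2 w := by
        unfold s3 s2
        rw [cnt_map_sig sig_eq_one sig_eq_three, cnt_map_sig sig_eq_three sig_eq_one]
      rw [this]; exact hs2
  · intro w _
    simp only [List.map_map]
    have : sig ∘ sig ∘ sig = id := funext sig_sig_sig
    rw [this, List.map_id]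
  · intro w hw h
    rw [Finset.mem_filter] at hw
    have hmem : (1 : ℕ) ∈ w := by
      have := (mem_W_iff.mp hw.1).mem_iff (a := 1)
      rw [this]
      simp [List.mem_append, List.mem_replicate]
      omega
    have := map_eq_self h 1 hmem
    simp [sig] at this
end
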